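/- For the discrete action sum 𝔖_d = ∑_{k=0}^{N-1} (1/h) tr((I − F_k) J_d) with F_k = R_kᵀ R_{k+1} ∈ SO(3), stationarity with respect to variations δR_k = R_k η_k (η_k skew-symmetric, vanishing at k = 0 and k = N) holds if and only if the matrix F_k J_d − J_d F_{k-1} is symmetric for k = 1, ..., N−1, equivalently F_k J_d − J_d F_kᵀ − J_d F_{k-1} + F_{k-1}ᵀ J_d = 0. -/

import Mathlib

open Matrix Finset

private lemma trace_skew_mul_symm (η M : Matrix (Fin 3) (Fin 3) ℝ)
    (hη : ηᵀ = -η) (hM : Mᵀ = M) : (η * M).trace = 0 := by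
  have h1 : (η * M).trace = -(η * M).trace := by
    conv_lhs => rw [← Matrix.trace_transpose, Matrix.transpose_mul, hη, hM,
      Matrix.mul_neg, Matrix.trace_neg, Matrix.trace_mul_comm]
  linarith

private lemma symm_of_trace_skew (M : Matrix (Fin 3) (Fin 3) ℝ)
    (H : ∀ η : Matrix (Fin 3) (Fin 3) ℝ, ηᵀ = -η → (η * M).trace = 0) : Mᵀ = M := by
  set A := M - Mᵀ with hA
  have hAskew : Aᵀ = -A := by
    simp [hA, Matrix.transpose_sub, Matrix.transpose_transpose]
  have h1 : (A * M).trace = 0 := H A hAskew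
  have h2 : (A * Mᵀ).trace = 0 := by
    calc (A * Mᵀ).trace = (Mᵀ * A).trace := Matrix.trace_mul_comm _ _
      _ = ((Mᵀ * A)ᵀ).trace := (Matrix.trace_transpose _).symm
      _ = (Aᵀ * Mᵀᵀ).trace := by rw [Matrix.transpose_mul]
      _ = -(A * M).trace := by rw [hAskew, Matrix.transpose_transpose, Matrix.neg_mul,
            Matrix.trace_neg]
      _ = 0 := by rw [h1, neg_zero]
  have h3 : (A * A).trace = 0 := by
    rw [hA, Matrix.mul_sub, Matrix.trace_sub, ← hA, h1, h2]; ring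
  have h4 : (Aᵀ * A).trace = 0 := by
    rw [hAskew, Matrix.neg_mul, Matrix.trace_neg, h3, neg_zero]
  have h5 : ∑ i : Fin 3, ∑ j : Fin 3, (A j i) ^ 2 = 0 := by
    rw [← h4]
    simp [Matrix.trace, Matrix.mul_apply, Matrix.diag, sq]
  have h6 : A = 0 := by
    ext i j
    have hm := (Finset.sum_eq_zero_iff_of_nonneg
      (fun p (_ : p ∈ (Finset.univ : Finset (Fin 3))) =>
        Finset.sum_nonneg (fun q _ => sq_nonneg (A q p)))).mp h5 j (Finset.mem_univ j)
    have hmm := (Finset.sum_eq_zero_iff_of_nonneg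
      (fun q (_ : q ∈ (Finset.univ : Finset (Fin 3))) => sq_nonneg (A q j))).mp hm i
      (Finset.mem_univ i)
    simpa using pow_eq_zero_iff (n := 2) (by norm_num) |>.mp hmm
  exact (sub_eq_zero.mp (hA ▸ h6)).symm

private lemma sum_identity (N : ℕ) (F η : ℕ → Matrix (Fin 3) (Fin 3) ℝ)
    (Jd : Matrix (Fin 3) (Fin 3) ℝ) (h0 : η 0 = 0) (hN : η N = 0) :
    ∑ k ∈ Finset.range N, ((η k * F k - F k * η (k + 1)) * Jd).trace
      = ∑ k ∈ Finset.Ico 1 N, (η k * (F k * Jd - Jd * F (k - 1))).trace := by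
  rcases Nat.eq_zero_or_pos N with rfl | hNpos
  · simp
  have step : ∀ k, ((η k * F k - F k * η (k + 1)) * Jd).trace
      = (η k * (F k * Jd)).trace - (η (k+1) * (Jd * F k)).trace := by
    intro k
    rw [Matrix.sub_mul, Matrix.trace_sub, Matrix.mul_assoc, Matrix.mul_assoc,
      Matrix.trace_mul_comm (F k) (η (k+1) * Jd), Matrix.mul_assoc]
  simp only [step]
  rw [Finset.sum_sub_distrib]
  have e1 : ∑ k ∈ Finset.range N, (η k * (F k * Jd)).trace
      = ∑ k ∈ Finset.Ico 1 N, (η k * (F k * Jd)).trace := by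
    rw [Finset.range_eq_Ico, Finset.sum_eq_sum_Ico_succ_bot hNpos]
    simp [h0]
  have e2 : ∑ k ∈ Finset.range N, (η (k+1) * (Jd * F k)).trace
      = ∑ k ∈ Finset.Ico 1 N, (η k * (Jd * F (k - 1))).trace := by
    have t1 := Finset.sum_Ico_eq_sum_range
      (f := fun k => (η k * (Jd * F (k-1))).trace) (m := 1) (n := N+1)
    simp only [Nat.add_sub_cancel] at t1
    have t2 : ∑ k ∈ Finset.range N, (η (k+1) * (Jd * F k)).trace
        = ∑ k ∈ Finset.range N, (η (1+k) * (Jd * F (1+k-1))).trace := by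
      apply Finset.sum_congr rfl
      intro k _
      rw [add_comm 1 k]
      simp
    rw [t2, ← t1, Finset.sum_Ico_succ_top (by omega : 1 ≤ N)]
    simp [hN]
  rw [e1, e2, ← Finset.sum_sub_distrib]
  apply Finset.sum_congr rfl
  intro k _
  rw [Matrix.mul_sub, Matrix.trace_sub]

/-- For the discrete action sum `𝔖_d = ∑_{k=0}^{N-1} (1/h) tr((I − F_k)J_d)`
with `F_k = R_kᵀR_{k+1} ∈ SO(3)`, stationarity with respect to variations
`δR_k = R_k η_k` (`η_k` skew-symmetric, vanishing at `k = 0` and `k = N`), i.e. vanishing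
of `δ𝔖_d = ∑_{k=0}^{N-1} (1/h) tr((η_k F_k − F_k η_{k+1}) J_d)` for all such variations,
holds if and only if `F_k J_d − J_d F_{k-1}` is symmetric for `k = 1, …, N−1`,
equivalently `F_k J_d − J_d F_kᵀ − J_d F_{k-1} + F_{k-1}ᵀ J_d = 0`. -/
theorem rigid_body_discrete_stationarity_iff
    (N : ℕ) (h : ℝ) (hh : h ≠ 0)
    (F : ℕ → Matrix (Fin 3) (Fin 3) ℝ)
    (hF : ∀ k, (F k)ᵀ * F k = 1 ∧ F k * (F k)ᵀ = 1)
    (Jd : Matrix (Fin 3) (Fin 3) ℝ) (hJd : Jdᵀ = Jd) :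
    (∀ η : ℕ → Matrix (Fin 3) (Fin 3) ℝ,
        (∀ k, (η k)ᵀ = -η k) → η 0 = 0 → η N = 0 →
        ∑ k ∈ Finset.range N,
          (1 / h) * ((η k * F k - F k * η (k + 1)) * Jd).trace = 0) ↔
      (∀ k, 1 ≤ k → k ≤ N - 1 →
        ((F k * Jd - Jd * F (k - 1))ᵀ = F k * Jd - Jd * F (k - 1) ∧
         F k * Jd - Jd * (F k)ᵀ - Jd * F (k - 1) + (F (k - 1))ᵀ * Jd = 0)) := by
  have ht : ∀ k : ℕ, (F k * Jd - Jd * F (k-1))ᵀ = Jd * (F k)ᵀ - (F (k-1))ᵀ * Jd := by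
    intro k
    rw [Matrix.transpose_sub, Matrix.transpose_mul, Matrix.transpose_mul, hJd]
  constructor
  · intro H k hk1 hkN
    have hN2 : 2 ≤ N := by omega
    have hkN' : k < N := by omega
    have hsym : (F k * Jd - Jd * F (k - 1))ᵀ = F k * Jd - Jd * F (k - 1) := by
      apply symm_of_trace_skew
      intro η0 hη0
      set ηf : ℕ → Matrix (Fin 3) (Fin 3) ℝ := fun j => if j = k then η0 else 0 with hηf
      have hsk : ∀ j, (ηf j)ᵀ = -ηf j := by
        intro j
        by_cases hj : j = k <;> simp [hηf, hj, hη0]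
      have h0' : ηf 0 = 0 := by rw [hηf]; exact if_neg (by omega)
      have hN' : ηf N = 0 := by rw [hηf]; exact if_neg (by omega)
      have hs := H ηf hsk h0' hN'
      rw [← Finset.mul_sum] at hs
      have hs2 : ∑ j ∈ Finset.range N,
          ((ηf j * F j - F j * ηf (j + 1)) * Jd).trace = 0 := by
        rcases mul_eq_zero.mp hs with hc | hc
        · exact absurd hc (by simpa using hh)
        · exact hc
      rw [sum_identity N F ηf Jd h0' hN'] at hs2
      rw [Finset.sum_eq_single k] at hs2
      · simpa [hηf] using hs2
      · intro b _ hb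
        simp [hηf, hb]
      · intro habs
        exact absurd (Finset.mem_Ico.mpr ⟨hk1, hkN'⟩) habs
    refine ⟨hsym, ?_⟩
    have hsym2 : Jd * (F k)ᵀ - (F (k-1))ᵀ * Jd = F k * Jd - Jd * F (k - 1) := by
      rw [← ht k]; exact hsym
    calc F k * Jd - Jd * (F k)ᵀ - Jd * F (k - 1) + (F (k - 1))ᵀ * Jd
        = (F k * Jd - Jd * F (k - 1)) - (Jd * (F k)ᵀ - (F (k-1))ᵀ * Jd) := by abel
      _ = 0 := by rw [hsym2, sub_self]
  · intro Hsym η hsk h0 hN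
    rw [← Finset.mul_sum, sum_identity N F η Jd h0 hN]
    have : ∑ k ∈ Finset.Ico 1 N, (η k * (F k * Jd - Jd * F (k - 1))).trace = 0 := by
      apply Finset.sum_eq_zero
      intro k hk
      rw [Finset.mem_Ico] at hk
      exact trace_skew_mul_symm _ _ (hsk k) (Hsym k hk.1 (by omega)).1
    rw [this, mul_zero]
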